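/- With the notation of the context, the subgroup E of additive automorphisms of K acts fixed-point-freely on K: for every e ∈ E with e ≠ id and every x ∈ K with x ≠ 0, one has e(x) ≠ x. -/

import Mathlib

lemma aux_geom (a : ℕ) (ha : 1 ≤ a) : ∀ m : ℕ,
    (a - 1) * ∑ j ∈ Finset.range m, a ^ j = a ^ m - 1 := by
  intro m
  induction m with
  | zero => simp
  | succ m ih =>
    rw [Finset.sum_range_succ, Nat.mul_add, ih]
    have h1 : 1 ≤ a ^ m := Nat.one_le_pow _ _ ha
    have h2 : a ^ m ≤ a ^ (m + 1) := Nat.pow_le_pow_right ha (by omega)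
    have h3 : (a - 1) * a ^ m = a ^ (m + 1) - a ^ m := by
      rw [Nat.sub_mul, one_mul, pow_succ, mul_comm (a ^ m) a]
    omega

lemma aux_mod (T a : ℕ) (h : a ≡ 1 [MOD T]) : ∀ m : ℕ,
    (∑ j ∈ Finset.range m, a ^ j) ≡ m [MOD T] := by
  intro m
  induction m with
  | zero => simp [Nat.ModEq.refl]
  | succ m ih =>
    rw [Finset.sum_range_succ]
    have : a ^ m ≡ 1 [MOD T] := by simpa using h.pow m
    simpa using ih.add this

/-- With the notation of the paper: `p` prime, `t > 1` coprime to `p`, `n` the multiplicative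
order of `p` mod `t²`, `s := (p^(nt) − 1)/(t(p^n − 1))`, `K` the finite field with `p^(nt)`
elements, `ωs, ωt2 ∈ K` primitive `s`-th and `t²`-th roots of unity, `mωs` and `mωt2` the
additive automorphisms of `K` given by multiplication by `ωs` and `ωt2`, and `Φ` the additive
automorphism `x ↦ x^(p^n)`.  The subgroup `E` of the additive automorphism group of `K`
generated by `mωs` and `Φ ∘ mωt2` acts fixed-point-freely on `K`: for every `e ∈ E` with
`e ≠ id` and every `x ∈ K` with `x ≠ 0`, one has `e x ≠ x`. -/
theorem stmt3 (p t n s : ℕ) (hp : p.Prime) (ht : 1 < t) (htp : Nat.Coprime t p)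
    (hn : 0 < n) (hnmod : p ^ n ≡ 1 [MOD t ^ 2])
    (hnmin : ∀ m : ℕ, 0 < m → p ^ m ≡ 1 [MOD t ^ 2] → n ≤ m)
    (hs : s = (p ^ (n * t) - 1) / (t * (p ^ n - 1)))
    (K : Type) [Field K] [Fintype K] (hK : Fintype.card K = p ^ (n * t))
    (ωs ωt2 : K) (hωs : IsPrimitiveRoot ωs s) (hωt2 : IsPrimitiveRoot ωt2 (t ^ 2))
    (mωs mωt2 Φ : AddAut K)
    (hmωs : ∀ x : K, mωs x = ωs * x) (hmωt2 : ∀ x : K, mωt2 x = ωt2 * x)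
    (hΦ : ∀ x : K, Φ x = x ^ (p ^ n)) :
    ∀ e ∈ AddSubgroup.closure {mωs, Φ + mωt2}, e ≠ 0 → ∀ x : K, x ≠ 0 → e x ≠ x := by
  classical
  set q : ℕ := p ^ n with hqdef
  have hq2 : 2 ≤ q := Nat.one_lt_pow hn.ne' hp.one_lt
  have hq1 : 1 ≤ q := by omega
  have ht0 : 0 < t := by omega
  have hqmod : q ≡ 1 [MOD t ^ 2] := hnmod
  have hqmodt : q ≡ 1 [MOD t] := hqmod.of_dvd ⟨t, (sq t)⟩
  have hcard : Fintype.card K = q ^ t := by rw [hK, hqdef, pow_mul]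
  -- the invariant for elements of the closure
  set P : AddAut K → Prop := fun e =>
    ∃ i c k : ℕ, c % t = k % t ∧ ∀ x : K, e x = ωs ^ i * ωt2 ^ c * x ^ (q ^ k) with hP
  -- multiplicativity of the invariant
  have Pmul : ∀ a b : AddAut K, P a → P b → P (a + b) := by
    rintro a b ⟨i₁, c₁, k₁, hc₁, ha⟩ ⟨i₂, c₂, k₂, hc₂, hb⟩
    refine ⟨i₁ + i₂ * q ^ k₁, c₁ + c₂ * q ^ k₁, k₁ + k₂, ?_, ?_⟩
    · have h1 : c₂ * q ^ k₁ ≡ k₂ * 1 [MOD t] :=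
        Nat.ModEq.mul hc₂ (by simpa using hqmodt.pow k₁)
      have : c₁ + c₂ * q ^ k₁ ≡ k₁ + k₂ [MOD t] := by
        simpa using (Nat.ModEq.add hc₁ h1)
      exact this
    · intro x
      rw [AddAut.add_apply, hb x, ha]
      rw [mul_pow, mul_pow, ← pow_mul, ← pow_mul, ← pow_mul]
      rw [pow_add ωs, pow_add ωt2, pow_add q, ← pow_mul x]
      ring
  have Pone : P 0 := ⟨0, 0, 0, rfl, by simp⟩
  have Ppow : ∀ (m : ℕ) (a : AddAut K), P a → P (m • a) := by
    intro m a ha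
    induction m with
    | zero => simpa using Pone
    | succ m ih => rw [succ_nsmul]; exact Pmul _ _ ih ha
  -- every element of the closure satisfies the invariant
  have key : ∀ e ∈ AddSubgroup.closure {mωs, Φ + mωt2}, P e := by
    intro e he
    refine AddSubgroup.closure_induction ?_ Pone (fun a b _ _ ha hb => Pmul a b ha hb)
      (fun a _ ha => ?_) he
    · intro x hx
      rcases hx with hx | hx
      · refine ⟨1, 0, 0, rfl, fun y => ?_⟩
        rw [hx, hmωs]; simp
      · rw [Set.mem_singleton_iff] at hx
        refine ⟨0, q, 1, ?_, fun y => ?_⟩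
        · exact hqmodt
        · rw [hx, AddAut.add_apply, hmωt2, hΦ, mul_pow]
          simp [hqdef]
    · -- inverse case via a⁻¹ = a ^ (orderOf a - 1)
      have h0 : 0 < addOrderOf a := addOrderOf_pos a
      have hinv : -a = (addOrderOf a - 1) • a := by
        apply neg_eq_of_add_eq_zero_right
        rw [← succ_nsmul']
        rw [Nat.sub_add_cancel h0]
        exact addOrderOf_nsmul_eq_zero a
      rw [hinv]
      exact Ppow _ _ ha
  -- basic arithmetic from the definition of s
  have hgeo := aux_geom q hq1
  have hS : (∑ j ∈ Finset.range t, q ^ j) ≡ t [MOD t ^ 2] := aux_mod _ _ hqmod t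
  have htS : t ∣ ∑ j ∈ Finset.range t, q ^ j := by
    have h1 : (∑ j ∈ Finset.range t, q ^ j) ≡ t [MOD t] := hS.of_dvd ⟨t, (sq t)⟩
    have h2 : t ≡ 0 [MOD t] := (Nat.modEq_zero_iff_dvd).2 dvd_rfl
    exact (Nat.modEq_zero_iff_dvd).1 (h1.trans h2)
  obtain ⟨S₀, hS₀⟩ := htS
  have hqt1 : (q - 1) * (t * S₀) = q ^ t - 1 := by rw [← hS₀, hgeo t]
  have hdvd : t * (q - 1) ∣ q ^ t - 1 := ⟨S₀, by rw [← hqt1]; ring⟩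
  have hpq : p ^ (n * t) = q ^ t := by rw [hqdef, ← pow_mul]
  have hsq : s * (t * (q - 1)) = q ^ t - 1 := by
    rw [hs, hpq]
    exact Nat.div_mul_cancel hdvd
  have hsS₀ : s = S₀ := by
    have hpos : 0 < t * (q - 1) := by
      have : 1 ≤ q - 1 := by omega
      exact Nat.mul_pos ht0 (by omega)
    have : s * (t * (q - 1)) = S₀ * (t * (q - 1)) := by
      rw [hsq, ← hqt1]; ring
    exact Nat.eq_of_mul_eq_mul_right hpos this
  have hts : t * s ≡ t [MOD t ^ 2] := by
    rw [hsS₀, ← hS₀]; exact hS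
  have hs1 : 1 ≤ s := by
    rcases Nat.eq_zero_or_pos s with h | h
    · exfalso
      have h1 : q ^ t - 1 = 0 := by rw [← hsq, h, zero_mul]
      have h2 : q ≤ q ^ t := Nat.le_self_pow (by omega) q
      omega
    · exact h
  have hcst : Nat.Coprime s t := by
    have h1 : t ^ 2 ∣ t * s - t := (Nat.modEq_iff_dvd' (Nat.le_mul_of_pos_right t hs1)).1 hts.symm
    have h2 : t * s - t = t * (s - 1) := by rw [Nat.mul_sub, mul_one]
    have h3 : t ∣ s - 1 := by
      have : t * t ∣ t * (s - 1) := by rw [← h2, ← sq]; exact h1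
      exact (Nat.mul_dvd_mul_iff_left ht0).1 this
    obtain ⟨w, hw⟩ := h3
    have hsw : s = 1 + t * w := by omega
    rw [hsw]
    exact (Nat.coprime_add_mul_left_left 1 t w).2 (Nat.coprime_one_left t)
  have hcts : Nat.Coprime (t ^ 2) s := ((hcst.pow_right 2).symm : Nat.Coprime (t^2) s)
  -- the field has q^t elements
  have hpowcard : ∀ y : K, y ^ (q ^ t) = y := by
    intro y
    rw [← hcard]; exact FiniteField.pow_card y
  have hred : ∀ (k : ℕ) (y : K), y ^ (q ^ k) = y ^ (q ^ (k % t)) := by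
    have haux : ∀ (a r : ℕ) (y : K), y ^ (q ^ (t * a + r)) = y ^ (q ^ r) := by
      intro a
      induction a with
      | zero => intro r y; simp
      | succ a ih =>
        intro r y
        have : t * (a + 1) + r = (t * a + r) + t := by ring
        rw [this, pow_add, pow_mul, hpowcard, ih]
    intro k y
    conv_lhs => rw [← Nat.div_add_mod k t]
    exact haux (k / t) (k % t) y
  -- main argument
  intro e he hne x hx hfix
  obtain ⟨i, c, k, hck, hfun⟩ := key e he
  set k' : ℕ := k % t with hk'def
  have hk't : k' < t := Nat.mod_lt _ ht0
  have hfun' : ∀ y : K, e y = ωs ^ i * ωt2 ^ c * y ^ (q ^ k') := by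
    intro y; rw [hfun y, hred k y]
  by_cases hk0 : k' = 0
  · -- multiplication case: the fixed point forces the scalar to be 1, so e = 1
    have hlm : ωs ^ i * ωt2 ^ c = 1 := by
      have := hfix
      rw [hfun' x, hk0] at this
      simp only [pow_zero, pow_one] at this
      exact mul_right_cancel₀ hx (by simpa using this)
    apply hne
    apply AddEquiv.ext
    intro y
    rw [hfun' y, hk0, hlm]
    simp
  · -- Frobenius-nontrivial case
    have hk'pos : 0 < k' := Nat.pos_of_ne_zero hk0
    set d : ℕ := Nat.gcd k' t with hddef
    have hd0 : 0 < d := Nat.gcd_pos_of_pos_left _ hk'pos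
    have hdk : d ∣ k' := Nat.gcd_dvd_left _ _
    have hdt : d ∣ t := Nat.gcd_dvd_right _ _
    have hdlt : d < t := lt_of_le_of_lt (Nat.le_of_dvd hk'pos hdk) hk't
    set M : ℕ := t / d with hMdef
    have hdM : d * M = t := Nat.mul_div_cancel' hdt
    have hM0 : 0 < M := Nat.div_pos (Nat.le_of_dvd ht0 hdt) hd0
    have hqd1 : 1 ≤ q ^ d := Nat.one_le_pow _ _ (by omega)
    have hqdmod : q ^ d ≡ 1 [MOD t ^ 2] := by simpa using hqmod.pow d
    set S' : ℕ := ∑ j ∈ Finset.range M, (q ^ d) ^ j with hS'def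
    have hgeo' : (q ^ d - 1) * S' = q ^ t - 1 := by
      rw [hS'def, aux_geom _ hqd1 M, ← pow_mul, hdM]
    have hmodS : S' ≡ M [MOD t ^ 2] := aux_mod _ _ hqdmod M
    set Q : ℕ := q ^ k' with hQdef
    have hQ1 : 1 ≤ Q := Nat.one_le_pow _ _ (by omega)
    have hdvdQ : q ^ d - 1 ∣ Q - 1 := by
      obtain ⟨m', hm'⟩ := hdk
      have : Q = (q ^ d) ^ m' := by rw [hQdef, hm', pow_mul]
      rw [this]
      simpa using Nat.sub_dvd_pow_sub_pow (q ^ d) 1 m'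
    have hQS : q ^ t - 1 ∣ (Q - 1) * S' := by
      obtain ⟨w, hw⟩ := hdvdQ
      exact ⟨w, by rw [hw, ← hgeo']; ring⟩
    -- units computation
    set u : Kˣ := Units.mk0 x hx with hudef
    have hu1 : u ^ (q ^ t - 1) = 1 := by
      have h := pow_card_eq_one (G := Kˣ) (x := u)
      rwa [Fintype.card_units, hcard] at h
    have huQS : u ^ ((Q - 1) * S') = 1 := by
      obtain ⟨v, hv⟩ := hQS
      rw [hv, pow_mul, hu1, one_pow]
    have heq : (ωs ^ i * ωt2 ^ c) * x ^ Q = x := by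
      have := hfix; rw [hfun' x] at this; exact this
    -- (ωs^i * ωt2^c)^S' = 1
    have hlam : (ωs ^ i * ωt2 ^ c) ^ S' = 1 := by
      have hxQ : x ^ Q ≠ 0 := pow_ne_zero _ hx
      have hlmval : ωs ^ i * ωt2 ^ c = x * (x ^ Q)⁻¹ :=
        (eq_mul_inv_iff_mul_eq₀ hxQ).2 heq
      have huS : u ^ (Q * S') = u ^ S' := by
        have hQ' : Q * S' = (Q - 1) * S' + S' := by
          have : Q - 1 + 1 = Q := by omega
          calc Q * S' = (Q - 1 + 1) * S' := by rw [this]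
          _ = (Q - 1) * S' + S' := by ring
        rw [hQ', pow_add, huQS, one_mul]
      have : (x * (x ^ Q)⁻¹) ^ S' = 1 := by
        have hux : (u : K) = x := rfl
        have hcalc : (u * (u ^ Q)⁻¹) ^ S' = 1 := by
          rw [mul_pow, inv_pow, ← pow_mul, huS, mul_inv_cancel]
        have := congrArg (Units.val) hcalc
        simpa [hux] using this
      rw [hlmval]; exact this
    -- kill the ωs part by raising to the power s
    have hws : ωs ^ s = 1 := hωs.pow_eq_one
    have hb : ωt2 ^ (c * S' * s) = 1 := by
      have h1 : (ωs ^ (i * S') * ωt2 ^ (c * S')) = 1 := by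
        rw [pow_mul, pow_mul, ← mul_pow]; exact hlam
      have h2 : (ωs ^ (i * S') * ωt2 ^ (c * S')) ^ s = 1 := by rw [h1, one_pow]
      rw [mul_pow, ← pow_mul, ← pow_mul, mul_comm (i * S') s, pow_mul, hws, one_pow,
        one_mul] at h2
      exact h2
    have hdvd1 : t ^ 2 ∣ c * S' * s := (hωt2.pow_eq_one_iff_dvd _).1 hb
    have hdvd2 : t ^ 2 ∣ c * S' := hcts.dvd_of_dvd_mul_right hdvd1
    have hdvd3 : t ^ 2 ∣ c * M := by
      have h1 : c * S' ≡ c * M [MOD t ^ 2] := hmodS.mul_left c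
      have h2 : c * S' ≡ 0 [MOD t ^ 2] := (Nat.modEq_zero_iff_dvd).2 hdvd2
      exact (Nat.modEq_zero_iff_dvd).1 (h1.symm.trans h2)
    have hdvd4 : d * t ∣ c := by
      have ht2 : t ^ 2 = (d * t) * M := by rw [← hdM]; ring
      rw [ht2] at hdvd3
      exact (Nat.mul_dvd_mul_iff_right hM0).1 hdvd3
    have htc : t ∣ c := dvd_trans ⟨d, mul_comm d t⟩ hdvd4
    -- contradiction: gcd t c = t but also gcd t c = d < t
    have hgcd1 : Nat.gcd t c = t := Nat.gcd_eq_left htc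
    have hgcd2 : Nat.gcd t c = d := by
      rw [Nat.gcd_rec t c, hck]
    omega
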